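/- For all x, y in the unit ball 𝔹ⁿ, tanh(ρ(x,y)/4) ≤ s_{𝔹ⁿ}(x,y) ≤ p_{𝔹ⁿ}(x,y) ≤ tanh(ρ(x,y)/2) ≤ 2·tanh(ρ(x,y)/4), where ρ is the hyperbolic metric of 𝔹ⁿ. -/

import Mathlib

open Metric Set
open scoped RealInnerProductSpace

/-- hyperbolic metric of the unit ball, via sinh(ρ/2) = |x-y|/(√(1-|x|²)√(1-|y|²)) -/
noncomputable def rhoB {n : ℕ} (x y : EuclideanSpace ℝ (Fin n)) : ℝ :=
  2 * Real.arsinh (dist x y / Real.sqrt ((1 - ‖x‖ ^ 2) * (1 - ‖y‖ ^ 2)))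

noncomputable def sB {n : ℕ} (x y : EuclideanSpace ℝ (Fin n)) : ℝ :=
  ⨆ z : Metric.sphere (0 : EuclideanSpace ℝ (Fin n)) 1,
    dist x y / (dist x (z : EuclideanSpace ℝ (Fin n)) + dist (z : EuclideanSpace ℝ (Fin n)) y)

noncomputable def pB {n : ℕ} (x y : EuclideanSpace ℝ (Fin n)) : ℝ :=
  dist x y / Real.sqrt (dist x y ^ 2 + 4 * (1 - ‖x‖) * (1 - ‖y‖))

lemma tanh_half' (w : ℝ) : Real.tanh (w/2) = Real.sinh w / (1 + Real.cosh w) := by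
  have hc : 0 < Real.cosh (w/2) := Real.cosh_pos _
  have hs : Real.sinh w = 2 * Real.sinh (w/2) * Real.cosh (w/2) := by
    rw [← Real.sinh_two_mul]; ring_nf
  have hcc : Real.cosh w = Real.cosh (w/2)^2 + Real.sinh (w/2)^2 := by
    rw [← Real.cosh_two_mul]; ring_nf
  have hid : Real.cosh (w/2)^2 - Real.sinh (w/2)^2 = 1 := Real.cosh_sq_sub_sinh_sq _
  rw [Real.tanh_eq_sinh_div_cosh, hs, hcc]
  have h1 : 1 + (Real.cosh (w/2)^2 + Real.sinh (w/2)^2) = 2 * Real.cosh (w/2)^2 := by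
    nlinarith
  rw [h1]
  field_simp

lemma tanh_arsinh' (s : ℝ) : Real.tanh (Real.arsinh s) = s / Real.sqrt (1 + s^2) := by
  rw [Real.tanh_eq_sinh_div_cosh, Real.sinh_arsinh, Real.cosh_arsinh]

lemma tanh_half_arsinh (s : ℝ) :
    Real.tanh (Real.arsinh s / 2) = s / (1 + Real.sqrt (1 + s^2)) := by
  rw [tanh_half', Real.sinh_arsinh, Real.cosh_arsinh]

lemma tanh_double_le (u : ℝ) (hu : 0 ≤ u) : Real.tanh (2*u) ≤ 2 * Real.tanh u := by
  rw [Real.tanh_eq_sinh_div_cosh, Real.tanh_eq_sinh_div_cosh, Real.sinh_two_mul,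
    Real.cosh_two_mul]
  have hc : 0 < Real.cosh u := Real.cosh_pos _
  have hs : 0 ≤ Real.sinh u := by
    have : Real.sinh 0 ≤ Real.sinh u := Real.sinh_le_sinh.2 hu
    simpa using this
  rw [div_le_iff₀ (by positivity), ← sub_nonneg]
  have : 2 * (Real.sinh u / Real.cosh u) * (Real.cosh u ^ 2 + Real.sinh u ^ 2)
      - 2 * Real.sinh u * Real.cosh u
      = 2 * Real.sinh u / Real.cosh u * (Real.sinh u ^2) := by
    field_simp; ring
  rw [this]; positivity

lemma rhoB_symm {n : ℕ} (x y : EuclideanSpace ℝ (Fin n)) : rhoB x y = rhoB y x := by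
  unfold rhoB
  rw [dist_comm, mul_comm (1 - ‖x‖ ^ 2)]

lemma sB_symm {n : ℕ} (x y : EuclideanSpace ℝ (Fin n)) : sB x y = sB y x := by
  unfold sB
  congr 1
  funext z
  rw [dist_comm x y, dist_comm x (z : EuclideanSpace ℝ (Fin n)),
    dist_comm (z : EuclideanSpace ℝ (Fin n)) y, add_comm]

lemma sB_nonneg {n : ℕ} (x y : EuclideanSpace ℝ (Fin n)) : 0 ≤ sB x y := by
  apply Real.iSup_nonneg
  intro z
  positivity

lemma rhoB_nonneg {n : ℕ} (x y : EuclideanSpace ℝ (Fin n)) : 0 ≤ rhoB x y := by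
  unfold rhoB
  have : 0 ≤ Real.arsinh (dist x y / Real.sqrt ((1 - ‖x‖ ^ 2) * (1 - ‖y‖ ^ 2))) := by
    rw [← Real.arsinh_zero]
    exact Real.arsinh_le_arsinh.2 (by positivity)
  linarith

lemma real_arith (A B α β p q X Y I : ℝ) (hA : 0 ≤ A) (hB : 0 ≤ B)
    (h5 : α ≤ -A) (h6 : β ≤ -B) (hp : 0 ≤ p) (hq : 0 ≤ q)
    (hX : 0 ≤ X) (hY : 0 ≤ Y)
    (f2 : p^2 = X^2 - α^2) (f3 : q^2 = Y^2 - β^2)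
    (f14 : -(p * q) ≤ I - α * β) :
    2 * A * B ≤ X * Y + I := by
  have hαβ : A * B ≤ α * β := by
    nlinarith [mul_nonneg (by linarith : (0:ℝ) ≤ -A - α) hB,
      mul_nonneg (by linarith : (0:ℝ) ≤ -B - β) hA,
      mul_nonneg (by linarith : (0:ℝ) ≤ -A - α) (by linarith : (0:ℝ) ≤ -B - β)]
  have hst2 : (X * Y)^2 = (α^2 + p^2) * (β^2 + q^2) := by nlinarith
  have hcs : (α * β + p * q)^2 ≤ (α^2 + p^2) * (β^2 + q^2) := by
    nlinarith [sq_nonneg (α * q - β * p)]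
  have hab0 : 0 ≤ α * β + p * q := by nlinarith [mul_nonneg hp hq]
  have hst : α * β + p * q ≤ X * Y := by
    nlinarith [mul_nonneg hX hY]
  nlinarith

lemma inner_key {n : ℕ} (w u v : EuclideanSpace ℝ (Fin n)) (hw : ‖w‖ = 1)
    (A B : ℝ) (hA : 0 ≤ A) (hB : 0 ≤ B)
    (h5 : ⟪w, u⟫ ≤ -A) (h6 : ⟪w, v⟫ ≤ -B) :
    2 * A * B ≤ ‖u‖ * ‖v‖ + ⟪u, v⟫ := by
  obtain ⟨u', hu'⟩ : ∃ p, p = u - ⟪w, u⟫ • w := ⟨_, rfl⟩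
  obtain ⟨v', hv'⟩ : ∃ p, p = v - ⟪w, v⟫ • w := ⟨_, rfl⟩
  have hww : ⟪w, w⟫ = 1 := by
    rw [real_inner_self_eq_norm_sq, hw]; norm_num
  have f2 : ‖u'‖^2 = ‖u‖^2 - ⟪w, u⟫^2 := by
    rw [hu', norm_sub_sq_real, real_inner_smul_right, norm_smul, hw,
      real_inner_comm u w]
    simp [sq_abs]
    ring
  have f3 : ‖v'‖^2 = ‖v‖^2 - ⟪w, v⟫^2 := by
    rw [hv', norm_sub_sq_real, real_inner_smul_right, norm_smul, hw,
      real_inner_comm v w]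
    simp [sq_abs]
    ring
  have f1 : ⟪u', v'⟫ = ⟪u, v⟫ - ⟪w, u⟫ * ⟪w, v⟫ := by
    rw [hu', hv', inner_sub_left, inner_sub_right, inner_sub_right,
      real_inner_smul_left, real_inner_smul_right, real_inner_smul_left,
      real_inner_smul_right, hww, real_inner_comm u w]
    ring
  have f4 : -(‖u'‖ * ‖v'‖) ≤ ⟪u', v'⟫ :=
    (abs_le.1 (abs_real_inner_le_norm u' v')).1
  have f14 : -(‖u'‖ * ‖v'‖) ≤ ⟪u, v⟫ - ⟪w, u⟫ * ⟪w, v⟫ := by rw [← f1]; exact f4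
  exact real_arith A B ⟪w, u⟫ ⟪w, v⟫ ‖u'‖ ‖v'‖ ‖u‖ ‖v‖ ⟪u, v⟫ hA hB h5 h6
    (norm_nonneg _) (norm_nonneg _) (norm_nonneg _) (norm_nonneg _) f2 f3 f14

lemma sum_dist_sq {n : ℕ} (x y w : EuclideanSpace ℝ (Fin n))
    (hx : ‖x‖ < 1) (hy : ‖y‖ < 1) (hw : ‖w‖ = 1) :
    Real.sqrt (dist x y ^ 2 + 4 * (1 - ‖x‖) * (1 - ‖y‖)) ≤ dist x w + dist w y := by
  have hdxw : dist x w = ‖x - w‖ := dist_eq_norm x w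
  have hdwy : dist w y = ‖y - w‖ := by rw [dist_comm]; exact dist_eq_norm y w
  have hS : (0:ℝ) ≤ ‖x - w‖ + ‖y - w‖ := by positivity
  rw [hdxw, hdwy,
    show ‖x - w‖ + ‖y - w‖ = Real.sqrt ((‖x - w‖ + ‖y - w‖)^2) from (Real.sqrt_sq hS).symm]
  apply Real.sqrt_le_sqrt
  have hd : dist x y ^ 2 = ‖x - w‖^2 - 2 * ⟪x - w, y - w⟫ + ‖y - w‖^2 := by
    rw [dist_eq_norm, show x - y = (x - w) - (y - w) by abel, norm_sub_sq_real]
  have hww : ⟪w, w⟫ = 1 := by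
    rw [real_inner_self_eq_norm_sq, hw]; norm_num
  have h5 : ⟪w, x - w⟫ ≤ -(1 - ‖x‖) := by
    rw [inner_sub_right, hww]
    have h := real_inner_le_norm w x
    rw [hw, one_mul] at h
    linarith
  have h6 : ⟪w, y - w⟫ ≤ -(1 - ‖y‖) := by
    rw [inner_sub_right, hww]
    have h := real_inner_le_norm w y
    rw [hw, one_mul] at h
    linarith
  have key := inner_key w (x - w) (y - w) hw (1 - ‖x‖) (1 - ‖y‖)
    (by linarith) (by linarith) h5 h6
  nlinarith [key, hd, sq_nonneg (‖x - w‖ + ‖y - w‖)]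

lemma A_pos {n : ℕ} (x y : EuclideanSpace ℝ (Fin n)) (hx : ‖x‖ < 1) (hy : ‖y‖ < 1) :
    0 < (1 - ‖x‖ ^ 2) * (1 - ‖y‖ ^ 2) := by
  have h1 : 0 ≤ ‖x‖ := norm_nonneg x
  have h2 : 0 ≤ ‖y‖ := norm_nonneg y
  apply mul_pos <;> nlinarith

lemma tanh_rho_half {n : ℕ} (x y : EuclideanSpace ℝ (Fin n)) (hx : ‖x‖ < 1) (hy : ‖y‖ < 1) :
    Real.tanh (rhoB x y / 2)
      = dist x y / Real.sqrt ((1 - ‖x‖ ^ 2) * (1 - ‖y‖ ^ 2) + dist x y ^ 2) := by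
  set d := dist x y with hd
  set A := (1 - ‖x‖ ^ 2) * (1 - ‖y‖ ^ 2) with hA
  have hA0 : 0 < A := A_pos x y hx hy
  have hsA : 0 < Real.sqrt A := Real.sqrt_pos.2 hA0
  have hd0 : 0 ≤ d := dist_nonneg
  have h2 : 0 < Real.sqrt (A + d^2) := Real.sqrt_pos.2 (by positivity)
  have e1 : rhoB x y / 2 = Real.arsinh (d / Real.sqrt A) := by
    rw [rhoB]; ring
  rw [e1, tanh_arsinh']
  have e2 : 1 + (d / Real.sqrt A)^2 = (A + d^2) / A := by
    rw [div_pow, Real.sq_sqrt hA0.le]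
    field_simp
  rw [e2, Real.sqrt_div (by positivity) A]
  field_simp

lemma tanh_rho_quarter {n : ℕ} (x y : EuclideanSpace ℝ (Fin n)) (hx : ‖x‖ < 1) (hy : ‖y‖ < 1) :
    Real.tanh (rhoB x y / 4)
      = dist x y / (Real.sqrt ((1 - ‖x‖ ^ 2) * (1 - ‖y‖ ^ 2))
          + Real.sqrt ((1 - ‖x‖ ^ 2) * (1 - ‖y‖ ^ 2) + dist x y ^ 2)) := by
  set d := dist x y with hd
  set A := (1 - ‖x‖ ^ 2) * (1 - ‖y‖ ^ 2) with hA
  have hA0 : 0 < A := A_pos x y hx hy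
  have hsA : 0 < Real.sqrt A := Real.sqrt_pos.2 hA0
  have hd0 : 0 ≤ d := dist_nonneg
  have h2 : 0 < Real.sqrt (A + d^2) := Real.sqrt_pos.2 (by positivity)
  have e1 : rhoB x y / 4 = Real.arsinh (d / Real.sqrt A) / 2 := by
    rw [rhoB]; ring
  rw [e1, tanh_half_arsinh]
  have e2 : 1 + (d / Real.sqrt A)^2 = (A + d^2) / A := by
    rw [div_pow, Real.sq_sqrt hA0.le]
    field_simp
  rw [e2, Real.sqrt_div (by positivity) A,
    show 1 + Real.sqrt (A + d^2) / Real.sqrt A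
      = (Real.sqrt A + Real.sqrt (A + d^2)) / Real.sqrt A by field_simp]
  field_simp

lemma sB_bddAbove {n : ℕ} (x y : EuclideanSpace ℝ (Fin n)) :
    BddAbove (Set.range fun z : Metric.sphere (0 : EuclideanSpace ℝ (Fin n)) 1 =>
      dist x y / (dist x (z : EuclideanSpace ℝ (Fin n)) + dist (z : EuclideanSpace ℝ (Fin n)) y)) := by
  refine ⟨1, ?_⟩
  rintro r ⟨w, rfl⟩
  exact div_le_one_of_le₀ (dist_triangle x _ y)
    (by positivity)

lemma part1_core {n : ℕ} (x y : EuclideanSpace ℝ (Fin n))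
    (hx : ‖x‖ < 1) (hy : ‖y‖ < 1) (hba : ‖y‖ ≤ ‖x‖) :
    Real.tanh (rhoB x y / 4) ≤ sB x y := by
  rw [tanh_rho_quarter x y hx hy]
  by_cases hd : dist x y = 0
  · rw [hd]
    simpa using sB_nonneg x y
  have hd0 : 0 < dist x y := lt_of_le_of_ne dist_nonneg (Ne.symm hd)
  have ha0 : 0 < ‖x‖ := by
    by_contra hcon
    push_neg at hcon
    have hx0 : ‖x‖ = 0 := le_antisymm hcon (norm_nonneg x)
    have hy0 : ‖y‖ = 0 := le_antisymm (hx0 ▸ hba) (norm_nonneg y)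
    exact hd (by rw [norm_eq_zero.1 hx0, norm_eq_zero.1 hy0]; simp)
  set a := ‖x‖ with haa
  set b := ‖y‖ with hbb
  set d := dist x y with hdd
  set A := (1 - a ^ 2) * (1 - b ^ 2) with hA
  have hA0 : 0 < A := A_pos x y hx hy
  have hsA : 0 < Real.sqrt A := Real.sqrt_pos.2 hA0
  have h2 : 0 < Real.sqrt (A + d^2) := Real.sqrt_pos.2 (by positivity)
  obtain ⟨z, hz⟩ : ∃ p : EuclideanSpace ℝ (Fin n), p = a⁻¹ • x := ⟨_, rfl⟩
  have hzn : ‖z‖ = 1 := by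
    rw [hz, norm_smul, norm_inv, Real.norm_eq_abs, abs_of_pos ha0, ← haa,
      inv_mul_cancel₀ ha0.ne']
  have hxz : dist x z = 1 - a := by
    rw [dist_eq_norm, hz, show x - a⁻¹ • x = (1 - a⁻¹) • x by rw [sub_smul, one_smul],
      norm_smul, Real.norm_eq_abs, ← haa]
    have h1 : (1:ℝ) - a⁻¹ ≤ 0 := by
      rw [sub_nonpos]
      exact (one_le_inv₀ ha0).2 hx.le
    rw [abs_of_nonpos h1]
    field_simp
    ring
  have hxa : a • z = x := by rw [hz]; exact smul_inv_smul₀ ha0.ne' x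
  have hBnorm : ‖z - a • y‖ = Real.sqrt (A + d^2) := by
    have hsq : ‖z - a • y‖^2 = A + d^2 := by
      have e1 : ‖z - a • y‖^2 = ‖z‖^2 - 2 * (a * ⟪z, y⟫) + ‖a • y‖^2 := by
        rw [norm_sub_sq_real, real_inner_smul_right]
      have e2 : d^2 = a^2 - 2 * (a * ⟪z, y⟫) + b^2 := by
        rw [hdd, dist_eq_norm, ← hxa, norm_sub_sq_real, real_inner_smul_left, norm_smul,
          Real.norm_eq_abs, abs_of_pos ha0, hzn, mul_pow]
        ring
      have e3 : ‖a • y‖^2 = a^2 * b^2 := by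
        rw [norm_smul, Real.norm_eq_abs, abs_of_pos ha0, mul_pow, ← hbb]
      rw [e1, e3, hzn, hA]
      nlinarith [e2]
    rw [← hsq, Real.sqrt_sq (norm_nonneg _)]
  have hzy : dist z y ≤ Real.sqrt (A + d^2) + (1 - a) * b := by
    have t1 : dist z y ≤ ‖z - a • y‖ + ‖a • y - y‖ := by
      rw [dist_eq_norm]
      calc ‖z - y‖ = ‖(z - a • y) + (a • y - y)‖ := by rw [show (z - a • y) + (a • y - y) = z - y by abel]
        _ ≤ ‖z - a • y‖ + ‖a • y - y‖ := norm_add_le _ _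
    have t2 : ‖a • y - y‖ = (1 - a) * b := by
      rw [show a • y - y = (a - 1) • y by rw [sub_smul, one_smul],
        norm_smul, Real.norm_eq_abs, abs_of_nonpos (by linarith), ← hbb]
      ring
    rw [hBnorm, t2] at t1
    exact t1
  have hsqA : (1 - a) * (1 + b) ≤ Real.sqrt A := by
    have hnn : (0:ℝ) ≤ (1 - a) * (1 + b) := by
      have : 0 ≤ b := norm_nonneg y
      nlinarith
    rw [show (1 - a) * (1 + b) = Real.sqrt (((1 - a) * (1 + b))^2) from (Real.sqrt_sq hnn).symm]
    apply Real.sqrt_le_sqrt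
    have hb0 : (0:ℝ) ≤ b := norm_nonneg y
    nlinarith [hba, hx, hb0, mul_nonneg (mul_nonneg (by linarith : (0:ℝ) ≤ 1 - a) (by linarith : (0:ℝ) ≤ 1 + b)) (by linarith : (0:ℝ) ≤ a - b)]
  have hsum : dist x z + dist z y ≤ Real.sqrt A + Real.sqrt (A + d^2) := by
    have e : (1 - a) + (1 - a) * b = (1 - a) * (1 + b) := by ring
    rw [hxz]
    linarith [hzy, hsqA]
  have hsum0 : 0 < dist x z + dist z y := by
    have := dist_triangle x z y
    rw [← hdd] at this
    linarith
  have step1 : d / (Real.sqrt A + Real.sqrt (A + d^2)) ≤ d / (dist x z + dist z y) :=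
    div_le_div_of_nonneg_left hd0.le hsum0 hsum
  have step2 : d / (dist x z + dist z y) ≤ sB x y := by
    unfold sB
    exact le_ciSup (sB_bddAbove x y) (⟨z, mem_sphere_zero_iff_norm.2 hzn⟩ :
      Metric.sphere (0 : EuclideanSpace ℝ (Fin n)) 1)
  exact le_trans step1 step2

theorem stmt7 {n : ℕ} (x y : EuclideanSpace ℝ (Fin n))
    (hx : x ∈ Metric.ball (0 : EuclideanSpace ℝ (Fin n)) 1)
    (hy : y ∈ Metric.ball (0 : EuclideanSpace ℝ (Fin n)) 1) :
    Real.tanh (rhoB x y / 4) ≤ sB x y ∧ sB x y ≤ pB x y ∧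
    pB x y ≤ Real.tanh (rhoB x y / 2) ∧
    Real.tanh (rhoB x y / 2) ≤ 2 * Real.tanh (rhoB x y / 4) := by
  have hx' : ‖x‖ < 1 := mem_ball_zero_iff.1 hx
  have hy' : ‖y‖ < 1 := mem_ball_zero_iff.1 hy
  have hb0 : (0:ℝ) ≤ ‖x‖ := norm_nonneg x
  have hb0' : (0:ℝ) ≤ ‖y‖ := norm_nonneg y
  have hq0 : (0:ℝ) < dist x y ^ 2 + 4 * (1 - ‖x‖) * (1 - ‖y‖) := by
    nlinarith [sq_nonneg (dist x y)]
  refine ⟨?_, ?_, ?_, ?_⟩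
  · -- part 1
    rcases le_total ‖y‖ ‖x‖ with h | h
    · exact part1_core x y hx' hy' h
    · rw [rhoB_symm, sB_symm]
      exact part1_core y x hy' hx' h
  · -- part 2 : sB ≤ pB
    unfold sB pB
    rcases isEmpty_or_nonempty (Metric.sphere (0 : EuclideanSpace ℝ (Fin n)) 1) with h | h
    · rw [Real.iSup_of_isEmpty]
      positivity
    · refine ciSup_le fun w => ?_
      exact div_le_div_of_nonneg_left dist_nonneg (Real.sqrt_pos.2 hq0)
        (sum_dist_sq x y w hx' hy' (mem_sphere_zero_iff_norm.1 w.2))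
  · -- part 3 : pB ≤ tanh(rho/2)
    rw [tanh_rho_half x y hx' hy']
    unfold pB
    have hA0 : 0 < (1 - ‖x‖ ^ 2) * (1 - ‖y‖ ^ 2) := A_pos x y hx' hy'
    apply div_le_div_of_nonneg_left dist_nonneg
      (Real.sqrt_pos.2 (by positivity))
    apply Real.sqrt_le_sqrt
    nlinarith [mul_nonneg (mul_nonneg (by linarith : (0:ℝ) ≤ 1 - ‖x‖)
      (by linarith : (0:ℝ) ≤ 1 - ‖y‖))
      (by nlinarith : (0:ℝ) ≤ 4 - (1 + ‖x‖) * (1 + ‖y‖))]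
  · -- part 4
    rw [show rhoB x y / 2 = 2 * (rhoB x y / 4) by ring]
    exact tanh_double_le _ (by linarith [rhoB_nonneg x y])
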